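/- arXiv:1911.01953 — 4 statements merged into one kernel-verified Lean document; each statement's English description precedes it below -/
import Mathlib

section
/- Let S, Σ, Δ be finite types and for each (a,b) ∈ Σ × Δ let Λ_{a,b} be a linear map on Matrix S S ℂ. Work with matrices over the product index type Δ × S. Define the partial trace Tr_Δ : Matrix (Δ×S) (Δ×S) ℂ → Matrix S S ℂ by (Tr_Δ X)(s,s') = ∑_{b∈Δ} X((b,s),(b,s')); the embedding emb_b : Matrix S S ℂ → Matrix (Δ×S) (Δ×S) ℂ by (emb_b M)((b₁,s₁),(b₂,s₂)) = M s₁ s₂ if b₁ = b₂ = b and 0 otherwise; the conditional channel Φ_a(X) = ∑_{b∈Δ} emb_b(Λ_{a,b}(Tr_Δ X)); and the instrument Ω_b(X) = E_b X E_b where E_b = emb_b(1). Then: (i) for all X and all a, b, Ω_b(Φ_a(X)) = emb_b(Λ_{a,b}(Tr_Δ X)); and (ii) for every n, every input word a₁…a_n ∈ Σ^n, every output word b₁…b_n ∈ Δ^n, and every X ∈ Matrix (Δ×S) (Δ×S) ℂ, Tr((Ω_{b_n} ∘ Φ_{a_n} ∘ ⋯ ∘ Ω_{b_1} ∘ Φ_{a_1})(X))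 = Tr((Λ_{a_n,b_n} ∘ ⋯ ∘ Λ_{a_1,b_1})(Tr_Δ X)). -/
open Matrix

/-- Partial trace over the classical register `Del`. -/
noncomputable def ptraceDel {S Del : Type*} [Fintype Del]
    (X : Matrix (Del × S) (Del × S) ℂ) : Matrix S S ℂ :=
  fun s s' => ∑ b : Del, X (b, s) (b, s')

/-- Embedding of a matrix on `S` into the `b`-block of `Del × S`. -/
def embDel {S Del : Type*} [DecidableEq Del] (b : Del)
    (M : Matrix S S ℂ) : Matrix (Del × S) (Del × S) ℂ :=
  fun q r => if q.1 = b ∧ r.1 = b then M q.2 r.2 else 0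

private lemma emb_mul {S Del : Type*} [Fintype S] [Fintype Del] [DecidableEq Del]
    (b b' : Del) (M N : Matrix S S ℂ) :
    embDel b M * embDel b' N = if b = b' then embDel b (M * N) else 0 := by
  funext q r
  simp only [Matrix.mul_apply, embDel, Fintype.sum_prod_type]
  by_cases hq : q.1 = b <;> by_cases hr : r.1 = b' <;> by_cases hbb : b = b' <;>
    simp [hq, hr, hbb, embDel, Matrix.mul_apply]
  intro h; exact absurd h.symm hbb

private lemma ptrace_emb {S Del : Type*} [Fintype Del] [DecidableEq Del]
    (b : Del) (M : Matrix S S ℂ) : ptraceDel (embDel b M) = M := by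
  funext s s'
  simp [ptraceDel, embDel]

private lemma trace_ptrace {S Del : Type*} [Fintype S] [Fintype Del]
    (X : Matrix (Del × S) (Del × S) ℂ) :
    X.trace = (ptraceDel X).trace := by
  simp only [Matrix.trace, Matrix.diag, ptraceDel, Fintype.sum_prod_type]
  exact Finset.sum_comm

private lemma sandwich {S Del : Type*} [Fintype S] [DecidableEq S] [Fintype Del] [DecidableEq Del]
    (b : Del) (Y : Del → Matrix S S ℂ) :
    embDel b (1 : Matrix S S ℂ) * (∑ b' : Del, embDel b' (Y b')) *
      embDel b (1 : Matrix S S ℂ) = embDel b (Y b) := by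
  rw [Finset.mul_sum, Finset.sum_mul]
  have : ∀ b' : Del, embDel b (1 : Matrix S S ℂ) * embDel b' (Y b') *
      embDel b (1 : Matrix S S ℂ) = if b' = b then embDel b (Y b) else 0 := by
    intro b'
    rw [emb_mul]
    by_cases h : b = b'
    · subst h; simp [emb_mul]
    · simp [h, Ne.symm h]
  simp only [this]
  simp

/-- Proposition 9 (mealy2moore): the conditional channel
`Φ a X = ∑ b, embDel b (Λ a b (ptraceDel X))` followed by the projective instrument
`Ω b X = E b * X * E b` (with `E b = embDel b 1`) reproduces the Mealy dynamics:
(i) `Ω b (Φ a X) = embDel b (Λ a b (ptraceDel X))`, and (ii) along any input word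
`a₁…a_n` and output word `b₁…b_n` the trace of the composed Moore evolution of `X`
equals the trace of the composed Mealy evolution of `ptraceDel X`. -/
theorem stmt_3 {S Sig Del : Type*} [Fintype S] [DecidableEq S]
    [Fintype Sig] [Fintype Del] [DecidableEq Del]
    (Λ : Sig → Del → Matrix S S ℂ →ₗ[ℂ] Matrix S S ℂ) :
    (∀ (X : Matrix (Del × S) (Del × S) ℂ) (a : Sig) (b : Del),
        (embDel b (1 : Matrix S S ℂ)) *
            (∑ b' : Del, embDel b' (Λ a b' (ptraceDel X))) *
            (embDel b (1 : Matrix S S ℂ))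
          = embDel b (Λ a b (ptraceDel X))) ∧
    (∀ (n : ℕ) (a : Fin n → Sig) (b : Fin n → Del)
        (X : Matrix (Del × S) (Del × S) ℂ)
        (chain₁ : ℕ → Matrix (Del × S) (Del × S) ℂ)
        (chain₂ : ℕ → Matrix S S ℂ),
        chain₁ 0 = X →
        (∀ k : Fin n, chain₁ ((k : ℕ) + 1) =
          (embDel (b k) (1 : Matrix S S ℂ)) *
            (∑ b' : Del, embDel b' (Λ (a k) b' (ptraceDel (chain₁ k)))) *
            (embDel (b k) (1 : Matrix S S ℂ))) →
        chain₂ 0 = ptraceDel X →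
        (∀ k : Fin n, chain₂ ((k : ℕ) + 1) = Λ (a k) (b k) (chain₂ k)) →
        (chain₁ n).trace = (chain₂ n).trace) := by
  constructor
  · intro X a b
    exact sandwich b _
  · intro n a b X chain₁ chain₂ h10 h1s h20 h2s
    have key : ∀ k : ℕ, k ≤ n → ptraceDel (chain₁ k) = chain₂ k := by
      intro k
      induction k with
      | zero => intro _; rw [h10, h20]
      | succ k ih =>
        intro hk
        have hk' : k < n := Nat.lt_of_succ_le hk
        have ihk := ih (Nat.le_of_lt hk')
        have h1 := h1s ⟨k, hk'⟩
        have h2 := h2s ⟨k, hk'⟩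
        simp only at h1 h2
        rw [h1, sandwich, ptrace_emb, ihk, h2]
    rw [trace_ptrace, key n le_rfl]
end

section
/- Let 𝒮 be a measurable space, A a nonempty finite type, κ : A → Kernel 𝒮 𝒮 a family of Markov kernels, R : 𝒮 → ℝ a bounded measurable function, and γ ∈ [0,1). For a bounded measurable V : 𝒮 → ℝ define the Bellman operator (𝔗V)(p) = ⨆_{a∈A} ( R(p) + γ · ∫ V(x) d(κ a p)(x) ). Then 𝔗 is a γ-contraction in the supremum distance: for all bounded measurable U, V : 𝒮 → ℝ and every C ≥ 0 such that |U(p) − V(p)| ≤ C for all p ∈ 𝒮, one has |(𝔗U)(p) − (𝔗V)(p)| ≤ γ·C for all p ∈ 𝒮. -/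
open MeasureTheory ProbabilityTheory

/-- Contraction part of Theorem 19 (banach, after Blackwell): the Bellman operator
`𝔗V p = ⨆ a, (R p + γ ∫ V d(κ a p))` of a discounted MDP with finite action set,
Markov kernels, bounded measurable reward and discount `γ ∈ [0,1)` is a
`γ`-contraction in the supremum distance. -/
theorem stmt_7 {𝒮 : Type*} [MeasurableSpace 𝒮] {A : Type*} [Fintype A] [Nonempty A]
    (κ : A → Kernel 𝒮 𝒮) (hκ : ∀ a, IsMarkovKernel (κ a))
    (R : 𝒮 → ℝ) (hRm : Measurable R) (CR : ℝ) (hRb : ∀ p, |R p| ≤ CR)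
    (γ : ℝ) (hγ0 : 0 ≤ γ) (hγ1 : γ < 1)
    (U V : 𝒮 → ℝ) (hUm : Measurable U) (hVm : Measurable V)
    (CU CV : ℝ) (hUb : ∀ p, |U p| ≤ CU) (hVb : ∀ p, |V p| ≤ CV)
    (C : ℝ) (hC : 0 ≤ C) (hUV : ∀ p, |U p - V p| ≤ C) :
    ∀ p : 𝒮,
      |(⨆ a : A, (R p + γ * ∫ x, U x ∂(κ a p))) -
        (⨆ a : A, (R p + γ * ∫ x, V x ∂(κ a p)))| ≤ γ * C := by
  intro p
  have hdiff : ∀ a : A, |(∫ x, U x ∂(κ a p)) - (∫ x, V x ∂(κ a p))| ≤ C := by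
    intro a
    haveI := hκ a
    haveI : IsProbabilityMeasure (κ a p) := (hκ a).isProbabilityMeasure p
    have hiU : Integrable U (κ a p) :=
      Integrable.mono' (integrable_const CU) hUm.aestronglyMeasurable
        (Filter.Eventually.of_forall fun x => by simpa using hUb x)
    have hiV : Integrable V (κ a p) :=
      Integrable.mono' (integrable_const CV) hVm.aestronglyMeasurable
        (Filter.Eventually.of_forall fun x => by simpa using hVb x)
    rw [← integral_sub hiU hiV, ← Real.norm_eq_abs]
    calc ‖∫ x, (U x - V x) ∂(κ a p)‖ ≤ C * ((κ a p) Set.univ).toReal :=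
          norm_integral_le_of_norm_le_const
            (Filter.Eventually.of_forall fun x =>
              (Real.norm_eq_abs _).trans_le (hUV x))
      _ = C := by simp
  have bdd : ∀ h : A → ℝ, BddAbove (Set.range h) := fun h => Finite.bddAbove_range h
  have key : ∀ f g : A → ℝ, (∀ a, f a ≤ g a + γ * C) → (⨆ a, f a) - (⨆ a, g a) ≤ γ * C := by
    intro f g hfg
    rw [sub_le_iff_le_add]
    exact ciSup_le fun a => (hfg a).trans (by
      have := le_ciSup (bdd g) a; linarith)
  rw [abs_sub_le_iff]
  constructor
  · refine key _ _ fun a => ?_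
    have h := hdiff a
    rw [abs_le] at h
    have : γ * ∫ x, U x ∂(κ a p) ≤ γ * ∫ x, V x ∂(κ a p) + γ * C := by nlinarith
    linarith
  · refine key _ _ fun a => ?_
    have h := hdiff a
    rw [abs_le] at h
    have : γ * ∫ x, V x ∂(κ a p) ≤ γ * ∫ x, U x ∂(κ a p) + γ * C := by nlinarith
    linarith
end

section
/- Let 𝒮 be a measurable space, A a nonempty finite type, κ : A → Kernel 𝒮 𝒮 a family of Markov kernels, R : 𝒮 → ℝ bounded measurable, and γ ∈ [0,1). Define the Bellman operator (𝔗V)(p) = ⨆_{a∈A} ( R(p) + γ · ∫ V(x) d(κ a p)(x) ) on bounded measurable functions. If U and V are bounded measurable functions on 𝒮 with 𝔗U = U and 𝔗V = V, then U = V. -/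
open MeasureTheory ProbabilityTheory

private lemma ciSup_abs_sub {A : Type*} [Fintype A] [Nonempty A] (f g : A → ℝ) (B : ℝ)
    (h : ∀ a, |f a - g a| ≤ B) : |(⨆ a, f a) - ⨆ a, g a| ≤ B := by
  rw [abs_sub_le_iff]
  constructor
  · rw [sub_le_iff_le_add]
    refine ciSup_le fun a => ?_
    have := abs_sub_le_iff.mp (h a)
    have hle : f a ≤ g a + B := by linarith [this.1]
    have := le_ciSup (Set.Finite.bddAbove (Set.finite_range g)) a
    linarith
  · rw [sub_le_iff_le_add]
    refine ciSup_le fun a => ?_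
    have := abs_sub_le_iff.mp (h a)
    have hle : g a ≤ f a + B := by linarith [this.2]
    have := le_ciSup (Set.Finite.bddAbove (Set.finite_range f)) a
    linarith

/-- Uniqueness part of Theorem 19 (banach, after Blackwell): the Bellman operator
of a discounted MDP with finite action set, Markov kernels, bounded measurable
reward and discount `γ ∈ [0,1)` has at most one fixed point among bounded
measurable functions. -/
theorem stmt_9 {𝒮 : Type*} [MeasurableSpace 𝒮] {A : Type*} [Fintype A] [Nonempty A]
    (κ : A → Kernel 𝒮 𝒮) (hκ : ∀ a, IsMarkovKernel (κ a))
    (R : 𝒮 → ℝ) (hRm : Measurable R) (CR : ℝ) (hRb : ∀ p, |R p| ≤ CR)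
    (γ : ℝ) (hγ0 : 0 ≤ γ) (hγ1 : γ < 1)
    (U V : 𝒮 → ℝ) (hUm : Measurable U) (hVm : Measurable V)
    (CU CV : ℝ) (hUb : ∀ p, |U p| ≤ CU) (hVb : ∀ p, |V p| ≤ CV)
    (hUfix : ∀ p : 𝒮, (⨆ a : A, (R p + γ * ∫ x, U x ∂(κ a p))) = U p)
    (hVfix : ∀ p : 𝒮, (⨆ a : A, (R p + γ * ∫ x, V x ∂(κ a p))) = V p) :
    U = V := by
  have key : ∀ n : ℕ, ∀ p, |U p - V p| ≤ γ ^ n * (CU + CV) := by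
    intro n
    induction n with
    | zero =>
      intro p
      simpa using (abs_sub _ _).trans (add_le_add (hUb p) (hVb p))
    | succ n ih =>
      intro p
      rw [← hUfix p, ← hVfix p]
      have : ∀ a : A, |(R p + γ * ∫ x, U x ∂(κ a p)) - (R p + γ * ∫ x, V x ∂(κ a p))|
          ≤ γ ^ (n + 1) * (CU + CV) := by
        intro a
        haveI := hκ a
        have hint : |(∫ x, U x ∂(κ a p)) - ∫ x, V x ∂(κ a p)| ≤ γ ^ n * (CU + CV) := by
          have hIU : Integrable U (κ a p) := by
            refine ⟨hUm.aestronglyMeasurable, ?_⟩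
            exact MeasureTheory.HasFiniteIntegral.of_bounded (C := CU)
              (Filter.Eventually.of_forall fun x => hUb x)
          have hIV : Integrable V (κ a p) := by
            refine ⟨hVm.aestronglyMeasurable, ?_⟩
            exact MeasureTheory.HasFiniteIntegral.of_bounded (C := CV)
              (Filter.Eventually.of_forall fun x => hVb x)
          rw [← integral_sub hIU hIV]
          calc |∫ x, (U x - V x) ∂(κ a p)|
              ≤ γ ^ n * (CU + CV) * ((κ a p) Set.univ).toReal := by
                rw [← Real.norm_eq_abs]
                refine norm_integral_le_of_norm_le_const ?_
                exact Filter.Eventually.of_forall fun x => by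
                  rw [Real.norm_eq_abs]; exact ih x
            _ = γ ^ n * (CU + CV) := by simp
        have heq : (R p + γ * ∫ x, U x ∂(κ a p)) - (R p + γ * ∫ x, V x ∂(κ a p))
            = γ * ((∫ x, U x ∂(κ a p)) - ∫ x, V x ∂(κ a p)) := by ring
        rw [heq, abs_mul, abs_of_nonneg hγ0, pow_succ', mul_assoc]
        exact mul_le_mul_of_nonneg_left hint hγ0
      exact ciSup_abs_sub _ _ _ this
  funext p
  have h0 : Filter.Tendsto (fun n : ℕ => γ ^ n * (CU + CV)) Filter.atTop (nhds 0) := by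
    simpa using (tendsto_pow_atTop_nhds_zero_of_lt_one hγ0 hγ1).mul_const (CU + CV)
  have : |U p - V p| ≤ 0 :=
    ge_of_tendsto h0 (Filter.Eventually.of_forall fun n => key n p)
  have := abs_nonpos_iff.mp this
  linarith [sub_eq_zero.mp this]
end

section
/- Let 𝒮 be a measurable space, A a nonempty finite type, κ : A → Kernel 𝒮 𝒮 Markov kernels, R : 𝒮 → ℝ bounded measurable, γ ∈ [0,1), and define (𝔗V)(p) = ⨆_{a∈A} ( R(p) + γ · ∫ V(x) d(κ a p)(x) ) on bounded measurable functions. Suppose V* is a bounded measurable fixed point of 𝔗, V₀ is bounded measurable, and C ≥ 0 satisfies |V₀(p) − V*(p)| ≤ C for all p. Then for every n ∈ ℕ and all p ∈ 𝒮, |(𝔗^[n] V₀)(p) − V*(p)| ≤ γ^n · C. -/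
open MeasureTheory ProbabilityTheory

/-- Sup difference bound for finite index. -/
lemma sup_abs_sub_le {A : Type*} [Fintype A] [Nonempty A] (f g : A → ℝ) (d : ℝ)
    (h : ∀ a, |f a - g a| ≤ d) : |(⨆ a, f a) - ⨆ a, g a| ≤ d := by
  rw [abs_sub_le_iff]
  constructor
  · rw [sub_le_iff_le_add]
    refine ciSup_le fun a => ?_
    have := (abs_sub_le_iff.mp (h a)).1
    calc f a ≤ g a + d := by linarith
    _ ≤ (⨆ a, g a) + d := by
        gcongr; exact le_ciSup (Set.Finite.bddAbove (Set.finite_range g)) a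
    _ = d + ⨆ a, g a := add_comm _ _
  · rw [sub_le_iff_le_add]
    refine ciSup_le fun a => ?_
    have := (abs_sub_le_iff.mp (h a)).2
    calc g a ≤ f a + d := by linarith
    _ ≤ (⨆ a, f a) + d := by
        gcongr; exact le_ciSup (Set.Finite.bddAbove (Set.finite_range f)) a
    _ = d + ⨆ a, f a := add_comm _ _

/-- Convergence estimate of Theorem 19 (banach, after Blackwell): value iteration
`𝔗ⁿ(V₀)` converges geometrically to a bounded measurable fixed point `V*` of the
Bellman operator, `‖𝔗ⁿ(V₀) − V*‖ ≤ γⁿ‖V₀ − V*‖` in the supremum distance. -/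
theorem stmt_10 {𝒮 : Type*} [MeasurableSpace 𝒮] {A : Type*} [Fintype A] [Nonempty A]
    (κ : A → Kernel 𝒮 𝒮) (hκ : ∀ a, IsMarkovKernel (κ a))
    (R : 𝒮 → ℝ) (hRm : Measurable R) (CR : ℝ) (hRb : ∀ p, |R p| ≤ CR)
    (γ : ℝ) (hγ0 : 0 ≤ γ) (hγ1 : γ < 1)
    (T : (𝒮 → ℝ) → (𝒮 → ℝ))
    (hT : ∀ (V : 𝒮 → ℝ) (p : 𝒮), T V p = ⨆ a : A, (R p + γ * ∫ x, V x ∂(κ a p)))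
    (Vstar : 𝒮 → ℝ) (hVstarm : Measurable Vstar)
    (CVstar : ℝ) (hVstarb : ∀ p, |Vstar p| ≤ CVstar)
    (hfix : T Vstar = Vstar)
    (V₀ : 𝒮 → ℝ) (hV₀m : Measurable V₀) (CV₀ : ℝ) (hV₀b : ∀ p, |V₀ p| ≤ CV₀)
    (C : ℝ) (hC : 0 ≤ C) (hC' : ∀ p, |V₀ p - Vstar p| ≤ C) :
    ∀ (n : ℕ) (p : 𝒮), |(T^[n] V₀) p - Vstar p| ≤ γ ^ n * C := by
  haveI := hκ
  -- integrability of bounded measurable functions against probability kernels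
  have hint : ∀ (V : 𝒮 → ℝ) (D : ℝ), Measurable V → (∀ p, |V p| ≤ D) →
      ∀ (a : A) (p : 𝒮), Integrable V (κ a p) := fun V D hVm hVb a p =>
    (integrable_const D).mono' hVm.aestronglyMeasurable
      (Filter.Eventually.of_forall fun x => by simpa using hVb x)
  -- measurability of T V
  have hTm : ∀ (V : 𝒮 → ℝ), Measurable V → Measurable (T V) := by
    intro V hVm
    have h1 : ∀ a : A, Measurable fun p => ∫ x, V x ∂(κ a p) := by
      intro a
      have : StronglyMeasurable (Function.uncurry fun (_ : 𝒮) (y : 𝒮) => V y) :=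
        (hVm.comp measurable_snd).stronglyMeasurable
      exact this.integral_kernel_prod_right.measurable
    have : T V = fun p => ⨆ a : A, (R p + γ * ∫ x, V x ∂(κ a p)) := funext (hT V)
    rw [this]
    exact Measurable.iSup fun a => hRm.add ((h1 a).const_mul γ)
  -- boundedness of T V
  have hTb : ∀ (V : 𝒮 → ℝ) (D : ℝ), (∀ p, |V p| ≤ D) →
      ∀ p, |T V p| ≤ CR + γ * D := by
    intro V D hVb p
    have hD : 0 ≤ D := le_trans (abs_nonneg _) (hVb p)
    rw [hT]
    have hb : ∀ a : A, |R p + γ * ∫ x, V x ∂(κ a p)| ≤ CR + γ * D := by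
      intro a
      have hI : |∫ x, V x ∂(κ a p)| ≤ D := by
        have := norm_integral_le_of_norm_le_const (μ := κ a p)
          (Filter.Eventually.of_forall fun x => by simpa using hVb x) (f := V)
        simpa using this
      calc |R p + γ * ∫ x, V x ∂(κ a p)| ≤ |R p| + γ * |∫ x, V x ∂(κ a p)| := by
            refine (abs_add_le _ _).trans ?_
            rw [abs_mul, abs_of_nonneg hγ0]
      _ ≤ CR + γ * D := by have := hRb p; nlinarith [hI]
    refine abs_le.mpr ⟨?_, ?_⟩
    · refine le_trans ?_ (le_ciSup (Set.Finite.bddAbove (Set.finite_range _)) (Classical.arbitrary A))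
      have := (abs_le.mp (hb (Classical.arbitrary A))).1
      linarith
    · exact ciSup_le fun a => (abs_le.mp (hb a)).2
  -- contraction step
  have hcontr : ∀ (V : 𝒮 → ℝ) (D E : ℝ), Measurable V → (∀ p, |V p| ≤ D) →
      (∀ p, |V p - Vstar p| ≤ E) →
      ∀ p, |T V p - Vstar p| ≤ γ * E := by
    intro V D E hVm hVb hVd p
    conv_lhs => rw [← hfix]
    rw [hT, hT]
    refine sup_abs_sub_le _ _ _ fun a => ?_
    have hiV := hint V D hVm hVb a p
    have hiW := hint Vstar CVstar hVstarm hVstarb a p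
    have : (R p + γ * ∫ x, V x ∂(κ a p)) - (R p + γ * ∫ x, Vstar x ∂(κ a p))
        = γ * ∫ x, (V x - Vstar x) ∂(κ a p) := by
      rw [integral_sub hiV hiW]; ring
    rw [this, abs_mul, abs_of_nonneg hγ0]
    gcongr
    have := norm_integral_le_of_norm_le_const (μ := κ a p)
      (Filter.Eventually.of_forall fun x => by simpa using hVd x)
      (f := fun x => V x - Vstar x)
    simpa using this
  -- induction
  intro n
  induction n with
  | zero => intro p; simpa using hC' p
  | succ n ih =>
    -- need measurability and boundedness of T^[n] V₀
    have key : ∀ m : ℕ, Measurable (T^[m] V₀) ∧ ∃ D, ∀ p, |(T^[m] V₀) p| ≤ D := by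
      intro m
      induction m with
      | zero => exact ⟨hV₀m, CV₀, hV₀b⟩
      | succ m ihm =>
        obtain ⟨hm, D, hD⟩ := ihm
        rw [Function.iterate_succ_apply']
        exact ⟨hTm _ hm, CR + γ * D, hTb _ D hD⟩
    obtain ⟨hm, D, hD⟩ := key n
    intro p
    rw [Function.iterate_succ_apply']
    have := hcontr (T^[n] V₀) D (γ ^ n * C) hm hD ih p
    calc |T (T^[n] V₀) p - Vstar p| ≤ γ * (γ ^ n * C) := this
    _ = γ ^ (n + 1) * C := by ring
end
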